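/- Let n ≥ 0, k ≥ 1 and let p_1,…,p_k be integers with 0 ≤ p_i ≤ n for all i and p_1 + ⋯ + p_k = n(k−1). Then M^n_{p_1,…,p_k} = n!/((n−p_1)!·(n−p_2)!⋯(n−p_k)!), the multinomial coefficient with parts n−p_1,…,n−p_k (which sum to n). -/

import Mathlib

open Finset

/-- Binomial coefficient `C(a, b)` with integer lower argument; `0` unless `0 ≤ b ≤ a`. -/
def chooseZ (a : ℕ) (b : ℤ) : ℕ := if 0 ≤ b then a.choose b.toNat else 0

/-- The coefficient `M^n_{p_1, …, p_k} = Σ_{t=0}^{n} (−1)^t C(n,t) ∏_i C(n−t, p_i−t)`. -/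
def Mcoef (n : ℕ) {k : ℕ} (p : Fin k → ℤ) : ℤ :=
  ∑ t ∈ Finset.range (n + 1), (-1 : ℤ) ^ t * (n.choose t : ℤ) *
    ∏ i, (chooseZ (n - t) ((p i) - (t : ℤ)) : ℤ)

/-- In the extremal case `p_1 + ⋯ + p_k = n(k−1)`, the coefficient `M^n_p` is the multinomial
coefficient with parts `n − p_1, …, n − p_k`. -/

lemma mult_per_term {k : ℕ} (q : Fin k → ℕ) (j : Fin k) :
    (∏ i, (q i).factorial) *
      (if q j = 0 then 0 else Nat.multinomial Finset.univ
        (fun i => if i = j then q i - 1 else q i)) =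
      q j * ((∑ i, q i) - 1).factorial := by
  rcases Nat.eq_zero_or_pos (q j) with h | h
  · simp [h]
  · rw [if_neg h.ne']
    set q' : Fin k → ℕ := fun i => if i = j then q i - 1 else q i with hq'
    have hprod : ∏ i, (q i).factorial = q j * ∏ i, (q' i).factorial := by
      rw [← Finset.mul_prod_erase univ (fun i => (q i).factorial) (mem_univ j),
          ← Finset.mul_prod_erase univ (fun i => (q' i).factorial) (mem_univ j), ← mul_assoc]
      congr 1
      · have : q' j = q j - 1 := by simp [hq']
        rw [this, ← Nat.mul_factorial_pred h.ne']
      · exact Finset.prod_congr rfl fun i hi => by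
          simp [hq', (Finset.mem_erase.mp hi).1]
    have hsum : ∑ i, q' i = (∑ i, q i) - 1 := by
      rw [← Finset.add_sum_erase univ q' (mem_univ j),
          ← Finset.add_sum_erase univ q (mem_univ j)]
      have h1 : q' j = q j - 1 := by simp [hq']
      have h2 : ∑ i ∈ univ.erase j, q' i = ∑ i ∈ univ.erase j, q i :=
        Finset.sum_congr rfl fun i hi => by simp [hq', (Finset.mem_erase.mp hi).1]
      omega
    rw [hprod, mul_assoc, Nat.multinomial_spec, hsum]

lemma mult_rec {k : ℕ} (q : Fin k → ℕ) (hpos : ∑ i, q i ≠ 0) :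
    ∑ j : Fin k, (if q j = 0 then 0 else Nat.multinomial Finset.univ
        (fun i => if i = j then q i - 1 else q i)) = Nat.multinomial Finset.univ q := by
  have hP : 0 < ∏ i, (q i).factorial :=
    Finset.prod_pos fun i _ => Nat.factorial_pos _
  apply Nat.eq_of_mul_eq_mul_left hP
  rw [Finset.mul_sum]
  simp_rw [mult_per_term q]
  rw [← Finset.sum_mul, Nat.multinomial_spec]
  exact Nat.mul_factorial_pred hpos


def auxTerm {k : ℕ} (q : Fin k → ℕ) (S : Finset (Fin k)) : ℕ → ℤ :=
  fun t => (∏ i ∈ S, if q i = 0 then 0 else ((t.choose (q i - 1) : ℤ))) *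
    ∏ i ∈ univ \ S, ((t.choose (q i)) : ℤ)

lemma key {k : ℕ} : ∀ (n : ℕ) (q : Fin k → ℕ), (∑ i, q i ≤ n) →
    (fwdDiff (1:ℕ))^[n] (fun t => ∏ i, ((t.choose (q i) : ℤ))) 0 =
      if ∑ i, q i = n then (Nat.multinomial Finset.univ q : ℤ) else 0 := by
  intro n
  induction n with
  | zero =>
    intro q hle
    have hq : ∀ i, q i = 0 := by
      intro i
      have := Finset.single_le_sum (f := q) (fun i _ => Nat.zero_le _) (mem_univ i)
      omega
    have hs : ∑ i, q i = 0 := Finset.sum_eq_zero fun i _ => hq i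
    rw [if_pos hs]
    simp only [Function.iterate_zero, id_eq]
    have h1 : ∀ i : Fin k, ((Nat.choose 0 (q i) : ℤ)) = 1 := by
      intro i; rw [hq i]; norm_num
    rw [Finset.prod_congr rfl fun i _ => h1 i, Finset.prod_const_one]
    have : Nat.multinomial Finset.univ q = 1 := by
      have := Nat.multinomial_spec (univ : Finset (Fin k)) q
      have hp : ∏ i, (q i).factorial = 1 :=
        Finset.prod_eq_one fun i _ => by rw [hq i]; rfl
      rw [hp, one_mul, hs] at this
      simpa using this
    rw [this]; norm_num
  | succ n IH =>
    intro q hle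
    have pascal : ∀ (t : ℕ) (i : Fin k),
        (((t+1).choose (q i) : ℤ)) =
          (if q i = 0 then 0 else ((t.choose (q i - 1) : ℤ))) + ((t.choose (q i)) : ℤ) := by
      intro t i
      rcases Nat.eq_zero_or_pos (q i) with h0 | h0
      · rw [h0]; norm_num
      · obtain ⟨m, hm⟩ : ∃ m, q i = m + 1 := ⟨q i - 1, by omega⟩
        rw [if_neg h0.ne', hm, Nat.add_sub_cancel]
        push_cast [Nat.choose_succ_succ]
        ring
    have hdiff : fwdDiff (1:ℕ) (fun t => ∏ i, ((t.choose (q i) : ℤ)))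
        = fun t => ∑ S ∈ (univ : Finset (Fin k)).powerset.erase ∅, auxTerm q S t := by
      funext t
      rw [fwdDiff]
      have expand : (∏ i, (((t+1).choose (q i) : ℤ)))
          = ∑ S ∈ (univ : Finset (Fin k)).powerset, auxTerm q S t := by
        rw [Finset.prod_congr rfl fun i _ => pascal t i]
        exact Finset.prod_add _ _ _
      have hempty : auxTerm q ∅ t = ∏ i, ((t.choose (q i) : ℤ)) := by
        simp [auxTerm]
      show (∏ i, (((t+1).choose (q i) : ℤ))) - ∏ i, ((t.choose (q i) : ℤ)) = _
      rw [expand, ← Finset.add_sum_erase _ _ (Finset.empty_mem_powerset _), hempty]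
      ring
    rw [Function.iterate_succ_apply, hdiff]
    have hsum_fun : (fun t => ∑ S ∈ (univ : Finset (Fin k)).powerset.erase ∅, auxTerm q S t)
        = ∑ S ∈ (univ : Finset (Fin k)).powerset.erase ∅, auxTerm q S := by
      funext t; rw [Finset.sum_apply]
    rw [hsum_fun, fwdDiff_iter_finset_sum, Finset.sum_apply]
    -- value of each term
    have hT : ∀ S : Finset (Fin k), S.Nonempty →
        (fwdDiff (1:ℕ))^[n] (auxTerm q S) 0 =
          if (∀ i ∈ S, 0 < q i) ∧ ∑ i, q i = n + S.card
          then (Nat.multinomial Finset.univ (fun i => if i ∈ S then q i - 1 else q i) : ℤ)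
          else 0 := by
      intro S hS
      by_cases hA : ∀ i ∈ S, 0 < q i
      · set q' : Fin k → ℕ := fun i => if i ∈ S then q i - 1 else q i with hq'
        have hhS : auxTerm q S = fun t => ∏ i, ((t.choose (q' i) : ℤ)) := by
          funext t
          show _ = ∏ i, ((t.choose (q' i) : ℤ))
          rw [auxTerm,
            ← Finset.prod_sdiff (Finset.subset_univ S) (f := fun i => ((t.choose (q' i) : ℤ))),
            mul_comm]
          congr 1
          · exact Finset.prod_congr rfl fun i hi => by
              simp [hq', (Finset.mem_sdiff.mp hi).2]
          · exact Finset.prod_congr rfl fun i hi => by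
              simp [hq', hi, (hA i hi).ne']
        have hsum' : ∑ i, q' i + S.card = ∑ i, q i := by
          rw [← Finset.sum_sdiff (Finset.subset_univ S) (f := q'),
              ← Finset.sum_sdiff (Finset.subset_univ S) (f := q)]
          have h1 : ∑ i ∈ univ \ S, q' i = ∑ i ∈ univ \ S, q i :=
            Finset.sum_congr rfl fun i hi => by simp [hq', (Finset.mem_sdiff.mp hi).2]
          have h2 : ∑ i ∈ S, q' i + S.card = ∑ i ∈ S, q i := by
            rw [Finset.card_eq_sum_ones, ← Finset.sum_add_distrib]
            exact Finset.sum_congr rfl fun i hi => by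
              have := hA i hi; simp only [hq', if_pos hi]; omega
          omega
        have hcard : 1 ≤ S.card := Finset.card_pos.mpr hS
        have hle' : ∑ i, q' i ≤ n := by omega
        rw [hhS, IH q' hle']
        by_cases hc2 : ∑ i, q i = n + S.card
        · rw [if_pos (by omega), if_pos ⟨hA, hc2⟩]
        · rw [if_neg (by omega), if_neg (by tauto)]
      · push_neg at hA
        obtain ⟨i0, hi0S, hi00⟩ := hA
        have hhS : auxTerm q S = fun _ => 0 := by
          funext t
          rw [auxTerm]
          have hz : (if q i0 = 0 then (0:ℤ) else ((t.choose (q i0 - 1) : ℤ))) = 0 := by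
            simp [Nat.le_zero.mp hi00]
          rw [Finset.prod_eq_zero hi0S hz, zero_mul]
        rw [hhS, Function.iterate_fixed (by simp) n]
        rw [if_neg (by rintro ⟨hA', _⟩; exact absurd (hA' i0 hi0S) (by omega))]
    by_cases hcase : ∑ i, q i = n + 1
    · rw [if_pos hcase]
      -- only singletons survive
      have himg : (univ : Finset (Fin k)).image (fun j => ({j} : Finset (Fin k)))
          ⊆ (univ : Finset (Fin k)).powerset.erase ∅ := by
        intro S hSm
        obtain ⟨j, _, rfl⟩ := Finset.mem_image.mp hSm
        simp
      rw [← Finset.sum_subset himg ?_]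
      · rw [Finset.sum_image (by intro a _ b _ hab; exact Finset.singleton_injective hab)]
        have hval : ∀ j : Fin k, (fwdDiff (1:ℕ))^[n] (auxTerm q {j}) 0 =
            (if q j = 0 then 0 else Nat.multinomial Finset.univ
              (fun i => if i = j then q i - 1 else q i) : ℤ) := by
          intro j
          rw [hT {j} (Finset.singleton_nonempty j)]
          rcases Nat.eq_zero_or_pos (q j) with h0 | h0
          · have hnot : ¬((∀ i ∈ ({j} : Finset (Fin k)), 0 < q i) ∧
                ∑ i, q i = n + ({j} : Finset (Fin k)).card) := by
              rintro ⟨hA', -⟩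
              exact absurd (hA' j (Finset.mem_singleton_self j)) (by omega)
            rw [if_neg hnot, if_pos h0]
          · have hyes : (∀ i ∈ ({j} : Finset (Fin k)), 0 < q i) ∧
                ∑ i, q i = n + ({j} : Finset (Fin k)).card := by
              constructor
              · intro i hi; rwa [Finset.mem_singleton.mp hi]
              · rw [Finset.card_singleton]; omega
            rw [if_pos hyes, if_neg h0.ne']
            norm_cast
            exact Nat.multinomial_congr fun i _ => by simp [Finset.mem_singleton]
        rw [Finset.sum_congr rfl fun j _ => hval j]
        have hcast : ∀ j : Fin k, (if q j = 0 then (0:ℤ) else (Nat.multinomial Finset.univ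
              (fun i => if i = j then q i - 1 else q i) : ℤ))
            = ((if q j = 0 then 0 else Nat.multinomial Finset.univ
              (fun i => if i = j then q i - 1 else q i) : ℕ) : ℤ) := by
          intro j; split_ifs <;> simp
        rw [Finset.sum_congr rfl fun j _ => hcast j, ← Nat.cast_sum,
          mult_rec q (by omega)]
      · intro S hS hSnot
        have hScard : 2 ≤ S.card := by
          have h1 : S ≠ ∅ := (Finset.mem_erase.mp hS).1
          have h2 : S.card ≠ 1 := by
            intro hc1
            obtain ⟨a, rfl⟩ := Finset.card_eq_one.mp hc1
            exact hSnot (Finset.mem_image_of_mem _ (mem_univ a))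
          have := Finset.card_eq_zero.not.mpr h1
          omega
        rw [hT S (Finset.nonempty_of_ne_empty (Finset.mem_erase.mp hS).1)]
        rw [if_neg (by rintro ⟨_, hc2⟩; omega)]
    · rw [if_neg hcase]
      apply Finset.sum_eq_zero
      intro S hS
      have hScard : 1 ≤ S.card :=
        Finset.card_pos.mpr (Finset.nonempty_of_ne_empty (Finset.mem_erase.mp hS).1)
      rw [hT S (Finset.nonempty_of_ne_empty (Finset.mem_erase.mp hS).1)]
      rw [if_neg (by rintro ⟨_, hc2⟩; omega)]


lemma chooseZ_eq (n t a : ℕ) (ht : t ≤ n) (ha : a ≤ n) :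
    chooseZ (n - t) ((a : ℤ) - t) = (n - t).choose (n - a) := by
  by_cases h : t ≤ a
  · have h0 : (0:ℤ) ≤ (a:ℤ) - t := by omega
    rw [chooseZ, if_pos h0]
    have h1 : ((a:ℤ) - t).toNat = a - t := by omega
    rw [h1]
    have h2 : a - t ≤ n - t := by omega
    have := Nat.choose_symm h2
    rw [show n - t - (a - t) = n - a by omega] at this
    exact this.symm
  · rw [chooseZ, if_neg (by omega)]
    exact (Nat.choose_eq_zero_of_lt (by omega)).symm

theorem Mcoef_extremal (n k : ℕ) (hk : 1 ≤ k) (p : Fin k → ℕ)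
    (hpn : ∀ i, p i ≤ n) (hsum : ∑ i, p i = n * (k - 1)) :
    Mcoef n (fun i => (p i : ℤ)) =
      (Nat.multinomial Finset.univ (fun i => n - p i) : ℤ) := by
  have hqsum : ∑ i, (n - p i) = n := by
    have h1 : ∑ i, (n - p i) + ∑ i, p i = k * n := by
      rw [← Finset.sum_add_distrib,
        Finset.sum_congr rfl fun i (_ : i ∈ univ) => Nat.sub_add_cancel (hpn i),
        Finset.sum_const, Finset.card_univ, Fintype.card_fin, smul_eq_mul]
    obtain ⟨k', rfl⟩ : ∃ k', k = k' + 1 := ⟨k - 1, by omega⟩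
    rw [hsum] at h1
    have h2 : n * (k' + 1 - 1) = k' * n := by
      rw [Nat.add_sub_cancel, Nat.mul_comm]
    have h3 : (k' + 1) * n = k' * n + n := by ring
    omega
  have hMc : Mcoef n (fun i => (p i : ℤ)) =
      (fwdDiff (1:ℕ))^[n] (fun s => ∏ i, ((s.choose (n - p i) : ℤ))) 0 := by
    rw [fwdDiff_iter_eq_sum_shift, Mcoef, ← Finset.sum_range_reflect]
    apply Finset.sum_congr rfl
    intro t ht
    have htn : t ≤ n := by
      rw [Finset.mem_range] at ht; omega
    rw [show n + 1 - 1 - t = n - t from rfl]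
    rw [Finset.prod_congr rfl fun i (_ : i ∈ univ) => by
      rw [chooseZ_eq n (n - t) (p i) (by omega) (hpn i),
        show n - (n - t) = t by omega]]
    rw [Nat.choose_symm htn, zsmul_eq_mul]
    norm_num [smul_eq_mul]
  rw [hMc, key n (fun i => n - p i) (le_of_eq hqsum), if_pos hqsum]
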